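/- Let (Ω, μ) be a probability space and A1, B1, C1, A2, B2, C2 measurable events. Then μ(A1ᶜ∩B1∩C1) + μ(A1∩B1ᶜ∩C1) + μ(A1∩B1∩C1ᶜ) + μ(A1ᶜ∩B1ᶜ∩C1ᶜ) + μ(A1∩B2∩C2) + μ(A1ᶜ∩B2ᶜ∩C2) + μ(A1ᶜ∩B2∩C2ᶜ) + μ(A1∩B2ᶜ∩C2ᶜ) + μ(A2∩B1∩C2) + μ(A2ᶜ∩B1ᶜ∩C2) + μ(A2ᶜ∩B1∩C2ᶜ) + μ(A2∩B1ᶜ∩C2ᶜ) + μ(A2∩B2∩C1) + μ(A2ᶜ∩B2ᶜ∩C1) + μ(A2ᶜ∩B2∩C1ᶜ) + μ(A2∩B2ᶜ∩C1ᶜ) ≤ 3. -/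
import Mathlib
set_option maxHeartbeats 2000000


open MeasureTheory ENNReal

/-- Boole's "condition of possible experience" for the GHZ events: in any
classical probability space the sixteen probabilities sum to at most 3. -/
theorem boole_ghz_inequality {Ω : Type*} [MeasurableSpace Ω]
    (μ : Measure Ω) [IsProbabilityMeasure μ]
    (A1 B1 C1 A2 B2 C2 : Set Ω)
    (hA1 : MeasurableSet A1) (hB1 : MeasurableSet B1) (hC1 : MeasurableSet C1)
    (hA2 : MeasurableSet A2) (hB2 : MeasurableSet B2) (hC2 : MeasurableSet C2) :
    μ (A1ᶜ ∩ B1 ∩ C1) + μ (A1 ∩ B1ᶜ ∩ C1) + μ (A1 ∩ B1 ∩ C1ᶜ) + μ (A1ᶜ ∩ B1ᶜ ∩ C1ᶜ) +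
    μ (A1 ∩ B2 ∩ C2) + μ (A1ᶜ ∩ B2ᶜ ∩ C2) + μ (A1ᶜ ∩ B2 ∩ C2ᶜ) + μ (A1 ∩ B2ᶜ ∩ C2ᶜ) +
    μ (A2 ∩ B1 ∩ C2) + μ (A2ᶜ ∩ B1ᶜ ∩ C2) + μ (A2ᶜ ∩ B1 ∩ C2ᶜ) + μ (A2 ∩ B1ᶜ ∩ C2ᶜ) +
    μ (A2 ∩ B2 ∩ C1) + μ (A2ᶜ ∩ B2ᶜ ∩ C1) + μ (A2ᶜ ∩ B2 ∩ C1ᶜ) + μ (A2 ∩ B2ᶜ ∩ C1ᶜ)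
      ≤ 3 := by
  have m : ∀ S : Set Ω, MeasurableSet S → Measurable (S.indicator (1 : Ω → ℝ≥0∞)) :=
    fun S hS => measurable_one.indicator hS
  have h01 : MeasurableSet (A1ᶜ ∩ B1 ∩ C1) := (hA1.compl.inter hB1).inter hC1
  have h02 : MeasurableSet (A1 ∩ B1ᶜ ∩ C1) := (hA1.inter hB1.compl).inter hC1
  have h03 : MeasurableSet (A1 ∩ B1 ∩ C1ᶜ) := (hA1.inter hB1).inter hC1.compl
  have h04 : MeasurableSet (A1ᶜ ∩ B1ᶜ ∩ C1ᶜ) := (hA1.compl.inter hB1.compl).inter hC1.compl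
  have h05 : MeasurableSet (A1 ∩ B2 ∩ C2) := (hA1.inter hB2).inter hC2
  have h06 : MeasurableSet (A1ᶜ ∩ B2ᶜ ∩ C2) := (hA1.compl.inter hB2.compl).inter hC2
  have h07 : MeasurableSet (A1ᶜ ∩ B2 ∩ C2ᶜ) := (hA1.compl.inter hB2).inter hC2.compl
  have h08 : MeasurableSet (A1 ∩ B2ᶜ ∩ C2ᶜ) := (hA1.inter hB2.compl).inter hC2.compl
  have h09 : MeasurableSet (A2 ∩ B1 ∩ C2) := (hA2.inter hB1).inter hC2
  have h10 : MeasurableSet (A2ᶜ ∩ B1ᶜ ∩ C2) := (hA2.compl.inter hB1.compl).inter hC2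
  have h11 : MeasurableSet (A2ᶜ ∩ B1 ∩ C2ᶜ) := (hA2.compl.inter hB1).inter hC2.compl
  have h12 : MeasurableSet (A2 ∩ B1ᶜ ∩ C2ᶜ) := (hA2.inter hB1.compl).inter hC2.compl
  have h13 : MeasurableSet (A2 ∩ B2 ∩ C1) := (hA2.inter hB2).inter hC1
  have h14 : MeasurableSet (A2ᶜ ∩ B2ᶜ ∩ C1) := (hA2.compl.inter hB2.compl).inter hC1
  have h15 : MeasurableSet (A2ᶜ ∩ B2 ∩ C1ᶜ) := (hA2.compl.inter hB2).inter hC1.compl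
  have h16 : MeasurableSet (A2 ∩ B2ᶜ ∩ C1ᶜ) := (hA2.inter hB2.compl).inter hC1.compl
  rw [← lintegral_indicator_one h01, ← lintegral_indicator_one h02,
      ← lintegral_indicator_one h03, ← lintegral_indicator_one h04,
      ← lintegral_indicator_one h05, ← lintegral_indicator_one h06,
      ← lintegral_indicator_one h07, ← lintegral_indicator_one h08,
      ← lintegral_indicator_one h09, ← lintegral_indicator_one h10,
      ← lintegral_indicator_one h11, ← lintegral_indicator_one h12,
      ← lintegral_indicator_one h13, ← lintegral_indicator_one h14,
      ← lintegral_indicator_one h15, ← lintegral_indicator_one h16,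
      ← lintegral_add_right _ (m _ h02), ← lintegral_add_right _ (m _ h03),
      ← lintegral_add_right _ (m _ h04), ← lintegral_add_right _ (m _ h05),
      ← lintegral_add_right _ (m _ h06), ← lintegral_add_right _ (m _ h07),
      ← lintegral_add_right _ (m _ h08), ← lintegral_add_right _ (m _ h09),
      ← lintegral_add_right _ (m _ h10), ← lintegral_add_right _ (m _ h11),
      ← lintegral_add_right _ (m _ h12), ← lintegral_add_right _ (m _ h13),
      ← lintegral_add_right _ (m _ h14), ← lintegral_add_right _ (m _ h15),
      ← lintegral_add_right _ (m _ h16)]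
  calc _ ≤ ∫⁻ _, (3 : ℝ≥0∞) ∂μ := by
        refine lintegral_mono fun ω => ?_
        by_cases ha1 : ω ∈ A1 <;> by_cases hb1 : ω ∈ B1 <;> by_cases hc1 : ω ∈ C1 <;>
          by_cases ha2 : ω ∈ A2 <;> by_cases hb2 : ω ∈ B2 <;> by_cases hc2 : ω ∈ C2 <;>
          simp [Set.indicator_apply, Set.mem_inter_iff, Set.mem_compl_iff,
            ha1, hb1, hc1, ha2, hb2, hc2] <;>
          norm_num
    _ = 3 := by simp
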